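/- Let M be a compact metric space with Borel probability measure m, f : M → M Borel measurable, and M' ⊆ M a Borel set with M' ⊆ f⁻¹(M') and m(M') ≥ α > 0. Then there exists a nonempty compact f-invariant set K with m(B(K) ∩ M') ≥ α which is minimal with this property: no proper nonempty compact f-invariant subset K' ⊊ K satisfies m(B(K') ∩ M') ≥ α. -/

import Mathlib

open MeasureTheory Filter Metric Set
open scoped Classical ENNReal Topology

/-- Frequency of visits, up to time `n - 1`, of the orbit of `x` to the
`ε`-neighborhood of `K`: `(1/n) · #{0 ≤ j ≤ n−1 : dist(f^j(x), K) < ε}`. -/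
noncomputable def visitFreq {M : Type*} [MetricSpace M] (f : M → M) (K : Set M) (ε : ℝ)
    (x : M) (n : ℕ) : ℝ :=
  (((Finset.range n).filter (fun j => infDist (f^[j] x) K < ε)).card : ℝ) / n

/-- Basin of statistical attraction of `K`. -/
def statBasin {M : Type*} [MetricSpace M] (f : M → M) (K : Set M) : Set M :=
  {x | ∀ ε > 0, Tendsto (fun n => visitFreq f K ε x n) atTop (𝓝 1)}

/-- The auxiliary basin `B_ε(K) = {x : liminf_n (1/n)·#{j < n : dist(f^j(x),K) < ε} > 1 − ε}`. -/
def statBasinEps {M : Type*} [MetricSpace M] (f : M → M) (K : Set M) (ε : ℝ) : Set M :=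
  {x | 1 - ε < atTop.liminf (fun n => visitFreq f K ε x n)}

section Aux

variable {M : Type*} [MetricSpace M] {f : M → M} {K K' : Set M} {ε ε' : ℝ} {x : M}

lemma visitFreq_le_one (f : M → M) (K : Set M) (ε : ℝ) (x : M) (n : ℕ) :
    visitFreq f K ε x n ≤ 1 := by
  rcases Nat.eq_zero_or_pos n with h | h
  · simp [visitFreq, h]
  · rw [visitFreq, div_le_one (by exact_mod_cast h)]
    exact_mod_cast (Finset.card_filter_le _ _).trans_eq (Finset.card_range n)

lemma visitFreq_mono (h : ∀ j, infDist (f^[j] x) K < ε → infDist (f^[j] x) K' < ε') (n : ℕ) :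
    visitFreq f K ε x n ≤ visitFreq f K' ε' x n := by
  unfold visitFreq
  rcases Nat.eq_zero_or_pos n with hn | hn
  · simp [hn]
  · have hcard : (((Finset.range n).filter (fun j => infDist (f^[j] x) K < ε)).card : ℝ) ≤
        (((Finset.range n).filter (fun j => infDist (f^[j] x) K' < ε')).card : ℝ) := by
      exact_mod_cast Finset.card_le_card
        (Finset.monotone_filter_right _ (fun j _ hj => h j hj))
    exact (div_le_div_iff_of_pos_right (by exact_mod_cast hn : (0:ℝ) < n)).2 hcard

lemma mem_statBasin_of_forall (hx : x ∈ statBasin f K')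
    (h : ∀ ε > 0, ∃ δ > 0, ∀ j, infDist (f^[j] x) K' < δ → infDist (f^[j] x) K < ε) :
    x ∈ statBasin f K := by
  intro ε hε
  obtain ⟨δ, hδ, hδ'⟩ := h ε hε
  exact tendsto_of_tendsto_of_tendsto_of_le_of_le (hx δ hδ) tendsto_const_nhds
    (visitFreq_mono hδ') (fun n => visitFreq_le_one f K ε x n)

lemma statBasin_mono (hK : K.Nonempty) (hKK' : K ⊆ K') :
    statBasin f K ⊆ statBasin f K' := by
  intro x hx
  refine mem_statBasin_of_forall hx (fun ε hε => ⟨ε, hε, fun j hj => ?_⟩)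
  exact (infDist_le_infDist_of_subset hKK' hK).trans_lt hj

lemma statBasin_univ [Nonempty M] : statBasin f univ = univ := by
  refine eq_univ_of_forall (fun x ε hε => ?_)
  have : ∀ n : ℕ, 1 ≤ n → visitFreq f univ ε x n = 1 := by
    intro n hn
    have h1 : ∀ j : ℕ, infDist (f^[j] x) (univ : Set M) < ε := by
      intro j
      have h0 : infDist (f^[j] x) (univ : Set M) ≤ 0 := by
        have := infDist_le_dist_of_mem (s := (univ : Set M)) (x := f^[j] x)
          (mem_univ (f^[j] x))
        simpa using this
      linarith
    rw [visitFreq, Finset.filter_true_of_mem (fun j _ => h1 j), Finset.card_range,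
      div_self (by exact_mod_cast Nat.one_le_iff_ne_zero.mp hn)]
  exact Tendsto.congr' (eventually_atTop.2 ⟨1, fun n hn => (this n hn).symm⟩) tendsto_const_nhds

variable [MeasurableSpace M] [OpensMeasurableSpace M]

lemma measurable_visitFreq (hf : Measurable f) (K : Set M) (ε : ℝ) (n : ℕ) :
    Measurable fun x => visitFreq f K ε x n := by
  have : (fun x => visitFreq f K ε x n) =
      fun x => (∑ j ∈ Finset.range n, if infDist (f^[j] x) K < ε then (1 : ℝ) else 0) / n := by
    funext x
    rw [visitFreq, Finset.card_filter]
    push_cast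
    rfl
  rw [this]
  refine Measurable.div_const (Finset.measurable_sum _ (fun j _ => ?_)) _
  refine Measurable.ite ?_ measurable_const measurable_const
  exact measurableSet_lt ((continuous_infDist_pt K).measurable.comp (hf.iterate j))
    measurable_const

lemma measurableSet_statBasin (hf : Measurable f) (K : Set M) :
    MeasurableSet (statBasin f K) := by
  have heq : statBasin f K = ⋂ (q : ℚ) (_ : 0 < q),
      {x | Tendsto (fun n => visitFreq f K (q : ℝ) x n) atTop (𝓝 1)} := by
    ext x
    simp only [mem_iInter, mem_setOf_eq]
    constructor
    · intro h q hq
      exact h (q : ℝ) (by exact_mod_cast hq)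
    · intro h ε hε
      obtain ⟨q, hq0, hqε⟩ := exists_rat_btwn hε
      refine tendsto_of_tendsto_of_tendsto_of_le_of_le (h q (by exact_mod_cast hq0))
        tendsto_const_nhds (visitFreq_mono (fun j hj => hj.trans hqε))
        (fun n => visitFreq_le_one f K ε x n)
  rw [heq]
  exact MeasurableSet.iInter fun q => MeasurableSet.iInter fun _ =>
    measurableSet_tendsto (𝓝 1) (fun n => measurable_visitFreq hf K (q : ℝ) n)

end Aux

/-- existence of an `α`-observable statistical attractor minimal restricted
to a forward invariant set `M'` with `m(M') ≥ α > 0`. -/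
theorem exists_minimal_statAttractor_restricted {M : Type*} [MetricSpace M] [CompactSpace M]
    [MeasurableSpace M] [BorelSpace M] (m : Measure M) [IsProbabilityMeasure m]
    (f : M → M) (hf : Measurable f) (α : ℝ) (hα : 0 < α)
    (M' : Set M) (hM' : MeasurableSet M') (hM'inv : M' ⊆ f ⁻¹' M')
    (hM'm : ENNReal.ofReal α ≤ m M') :
    ∃ K : Set M, K.Nonempty ∧ IsCompact K ∧ f ⁻¹' K = K ∧
      ENNReal.ofReal α ≤ m (statBasin f K ∩ M') ∧
      ∀ K' : Set M, K' ⊆ K → K' ≠ K → K'.Nonempty → IsCompact K' → f ⁻¹' K' = K' →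
        ¬ ENNReal.ofReal α ≤ m (statBasin f K' ∩ M') := by
  have hMne : Nonempty M := by
    by_contra h
    rw [not_nonempty_iff] at h
    have h1 : m univ = 1 := measure_univ
    rw [Set.univ_eq_empty_iff.2 h, measure_empty] at h1
    simp at h1
  set S : Set (Set M) := {K | K.Nonempty ∧ IsCompact K ∧ f ⁻¹' K = K ∧
    ENNReal.ofReal α ≤ m (statBasin f K ∩ M')} with hS
  have huniv : (univ : Set M) ∈ S := by
    refine ⟨univ_nonempty, isCompact_univ, rfl, ?_⟩
    rw [statBasin_univ, univ_inter]
    exact hM'm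
  have hzorn : ∀ c ⊆ S, IsChain (· ⊆ ·) c → c.Nonempty →
      ∃ lb ∈ S, ∀ s ∈ c, lb ⊆ s := by
    intro c hcS hchain hcne
    obtain ⟨K₀, hK₀c⟩ := hcne
    -- reduce to a countable subfamily with the same intersection
    obtain ⟨T, hTcount, hTsub, hTun⟩ := TopologicalSpace.isOpen_sUnion_countable (compl '' c)
      (by rintro s ⟨K, hKc, rfl⟩; exact ((hcS hKc).2.1.isClosed).isOpen_compl)
    set c' : Set (Set M) := insert K₀ (compl '' T) with hc'
    have hc'sub : c' ⊆ c := by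
      rintro s (rfl | ⟨t, htT, rfl⟩)
      · exact hK₀c
      · obtain ⟨K, hKc, rfl⟩ := hTsub htT
        simpa using hKc
    have hc'count : c'.Countable := (Set.Countable.image hTcount _).insert _
    have hc'inter : ⋂₀ c' = ⋂₀ c := by
      have h1 : ⋂₀ (compl '' T) = ⋂₀ c := by
        rw [← compl_compl (⋂₀ (compl '' T)), ← compl_compl (⋂₀ c), compl_sInter, compl_sInter,
          compl_compl_image, hTun]
      rw [hc', sInter_insert, h1]
      exact inter_eq_right.2 (sInter_subset_of_mem hK₀c)
    obtain ⟨g, hg⟩ := hc'count.exists_eq_range ⟨K₀, mem_insert _ _⟩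
    have hgc : ∀ n, g n ∈ c := fun n => hc'sub (hg ▸ mem_range_self n)
    have hgS : ∀ n, g n ∈ S := fun n => hcS (hgc n)
    have hKinf : ⋂₀ c = ⋂ n, g n := by rw [← hc'inter, hg, sInter_range]
    set Kinf := ⋂ n, g n with hKinfdef
    -- directedness of g
    have hdir : Directed (· ⊇ ·) g := by
      intro i j
      rcases hchain.total (hgc i) (hgc j) with h | h
      · exact ⟨i, Subset.rfl, h⟩
      · exact ⟨j, h, Subset.rfl⟩
    -- Kinf is nonempty, compact, invariant
    have hKinfne : Kinf.Nonempty :=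
      IsCompact.nonempty_iInter_of_directed_nonempty_isCompact_isClosed g hdir
        (fun n => (hgS n).1) (fun n => (hgS n).2.1) (fun n => (hgS n).2.1.isClosed)
    have hKinfcl : IsClosed Kinf := isClosed_iInter (fun n => (hgS n).2.1.isClosed)
    have hKinfcpt : IsCompact Kinf := hKinfcl.isCompact
    have hKinfinv : f ⁻¹' Kinf = Kinf := by
      rw [hKinfdef, preimage_iInter]
      exact iInter_congr (fun n => (hgS n).2.2.1)
    -- basin inclusion
    have hbasin : (⋂ n, statBasin f (g n)) ⊆ statBasin f Kinf := by
      intro x hx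
      simp only [mem_iInter] at hx
      refine fun ε hε => ?_
      -- find n with g n ⊆ thickening (ε/2) Kinf
      have hε2 : 0 < ε / 2 := by linarith
      have : ∃ n, g n ⊆ thickening (ε / 2) Kinf := by
        by_contra hcon
        push_neg at hcon
        have hne : ∀ n, (g n \ thickening (ε / 2) Kinf).Nonempty := by
          intro n
          obtain ⟨y, hy, hy'⟩ := not_subset.1 (hcon n)
          exact ⟨y, hy, hy'⟩
        have hdir' : Directed (· ⊇ ·) (fun n => g n \ thickening (ε / 2) Kinf) := by
          intro i j
          obtain ⟨k, h1, h2⟩ := hdir i j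
          exact ⟨k, diff_subset_diff_left h1, diff_subset_diff_left h2⟩
        have hcl : ∀ n, IsClosed (g n \ thickening (ε / 2) Kinf) :=
          fun n => (hgS n).2.1.isClosed.sdiff (isOpen_thickening)
        have hnonempty := IsCompact.nonempty_iInter_of_directed_nonempty_isCompact_isClosed
          _ hdir' hne (fun n => (hcl n).isCompact) hcl
        obtain ⟨y, hy⟩ := hnonempty
        simp only [mem_iInter, mem_diff] at hy
        have hyK : y ∈ Kinf := mem_iInter.2 (fun n => (hy n).1)
        exact (hy 0).2 (self_subset_thickening hε2 Kinf hyK)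
      obtain ⟨n, hn⟩ := this
      have hsq : ∀ j, infDist (f^[j] x) (g n) < ε / 2 → infDist (f^[j] x) Kinf < ε := by
        intro j hj
        obtain ⟨y, hyg, hyd⟩ := (infDist_lt_iff (hgS n).1).1 hj
        have hy2 : infDist y Kinf < ε / 2 := (mem_thickening_iff_infDist_lt hKinfne).1 (hn hyg)
        calc infDist (f^[j] x) Kinf ≤ infDist y Kinf + dist (f^[j] x) y :=
              infDist_le_infDist_add_dist
          _ < ε / 2 + ε / 2 := by apply add_lt_add hy2 hyd
          _ = ε := by ring
      exact tendsto_of_tendsto_of_tendsto_of_le_of_le (hx n (ε / 2) hε2)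
        tendsto_const_nhds (visitFreq_mono hsq) (fun k => visitFreq_le_one f Kinf ε x k)
    -- measure estimate
    have hAmeas : ∀ n, NullMeasurableSet (statBasin f (g n) ∩ M') m :=
      fun n => ((measurableSet_statBasin hf (g n)).inter hM').nullMeasurableSet
    have hAdir : Directed (· ⊇ ·) (fun n => statBasin f (g n) ∩ M') := by
      intro i j
      obtain ⟨k, h1, h2⟩ := hdir i j
      exact ⟨k, inter_subset_inter_left _ (statBasin_mono (hgS k).1 h1),
        inter_subset_inter_left _ (statBasin_mono (hgS k).1 h2)⟩
    have hmeq : m (⋂ n, statBasin f (g n) ∩ M') = ⨅ n, m (statBasin f (g n) ∩ M') :=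
      hAdir.measure_iInter hAmeas ⟨0, measure_ne_top m _⟩
    have hmge : ENNReal.ofReal α ≤ m (statBasin f Kinf ∩ M') := by
      calc ENNReal.ofReal α ≤ ⨅ n, m (statBasin f (g n) ∩ M') :=
            le_iInf (fun n => (hgS n).2.2.2)
        _ = m (⋂ n, statBasin f (g n) ∩ M') := hmeq.symm
        _ ≤ m (statBasin f Kinf ∩ M') := by
            apply measure_mono
            rw [← iInter_inter]
            exact inter_subset_inter_left _ hbasin
    refine ⟨Kinf, ⟨hKinfne, hKinfcpt, hKinfinv, hmge⟩, fun s hs => ?_⟩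
    rw [← hKinf]
    exact sInter_subset_of_mem hs
  obtain ⟨K, -, hKmin⟩ := zorn_superset_nonempty S hzorn univ huniv
  obtain ⟨hKne, hKcpt, hKinv, hKm⟩ := hKmin.prop
  refine ⟨K, hKne, hKcpt, hKinv, hKm, ?_⟩
  intro K' hK'sub hK'ne' hK'ne hK'cpt hK'inv hK'm
  have hK'S : K' ∈ S := ⟨hK'ne, hK'cpt, hK'inv, hK'm⟩
  exact hK'ne' (Subset.antisymm hK'sub (hKmin.2 hK'S hK'sub))
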